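/- The adjugate (classical adjoint) of the Jacobian matrix of M_μ admits the separated representation adj(D M_μ(x)) = ψ²(μ)·I₂ + ψ¹(μ)·(1/‖x‖³)·[[x₁², x₁x₂], [x₁x₂, x₂²]] for every x = (x₁,x₂) ≠ 0, where I₂ is the 2×2 identity matrix. -/

import Mathlib

/-- Parametric function `ψ¹(μ) = R_out(μ−1)/(R_out−1)` of the Couette geometric mapping. -/
noncomputable def couettePsi1 (Rout μ : ℝ) : ℝ := Rout * (μ - 1) / (Rout - 1)

/-- Parametric function `ψ²(μ) = (R_out−μ)/(R_out−1)` of the Couette geometric mapping. -/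
noncomputable def couettePsi2 (Rout μ : ℝ) : ℝ := (Rout - μ) / (Rout - 1)

/-- The Couette geometric mapping `M_μ(x) = (ψ¹(μ)/‖x‖)·x + ψ²(μ)·x`. -/
noncomputable def couetteMap (Rout μ : ℝ) (x : EuclideanSpace ℝ (Fin 2)) :
    EuclideanSpace ℝ (Fin 2) :=
  (couettePsi1 Rout μ / ‖x‖) • x + couettePsi2 Rout μ • x

/-- The Jacobian matrix of the Couette geometric mapping at `x`: the 2×2 matrix of the
Fréchet derivative of `M_μ` at `x`. -/
noncomputable def couetteJacobian (Rout μ : ℝ) (x : EuclideanSpace ℝ (Fin 2)) :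
    Matrix (Fin 2) (Fin 2) ℝ :=
  Matrix.of fun i j => fderiv ℝ (couetteMap Rout μ) x (EuclideanSpace.single j 1) i

/-- Derivative of the norm on a real inner product space away from the origin. -/
lemma hasFDerivAt_norm' {E : Type*} [NormedAddCommGroup E] [InnerProductSpace ℝ E]
    (x : E) (hx : x ≠ 0) :
    HasFDerivAt (fun y : E => ‖y‖) (‖x‖⁻¹ • innerSL ℝ x) x := by
  have h1 : HasFDerivAt (fun y : E => ‖y‖ ^ 2) (2 • innerSL ℝ x) x :=
    (hasStrictFDerivAt_norm_sq x).hasFDerivAt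
  have hx0 : ‖x‖ ≠ 0 := norm_ne_zero_iff.mpr hx
  have hx2 : ‖x‖ ^ 2 ≠ 0 := pow_ne_zero _ hx0
  have h2 := (Real.hasDerivAt_sqrt hx2).comp_hasFDerivAt x h1
  have heq : (fun y : E => Real.sqrt (‖y‖ ^ 2)) = fun y : E => ‖y‖ := by
    funext y; rw [Real.sqrt_sq (norm_nonneg y)]
  simp only [Function.comp_def] at h2
  rw [heq] at h2
  refine h2.congr_fderiv (Eq.symm ?_)
  rw [Real.sqrt_sq (norm_nonneg x)]
  ext v
  simp only [ContinuousLinearMap.smul_apply, ContinuousLinearMap.coe_smul', Pi.smul_apply,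
    smul_eq_mul, two_smul]
  field_simp
  rw [ContinuousLinearMap.add_apply]; ring

/-- Entrywise formula for the Jacobian of the Couette mapping. -/
lemma couetteJacobian_apply (Rout μ : ℝ) (x : EuclideanSpace ℝ (Fin 2)) (hx : x ≠ 0)
    (i j : Fin 2) :
    couetteJacobian Rout μ x i j =
      (couettePsi1 Rout μ / ‖x‖ + couettePsi2 Rout μ) * (if i = j then 1 else 0)
        - couettePsi1 Rout μ / ‖x‖ ^ 3 * (x i * x j) := by
  have hx0 : ‖x‖ ≠ 0 := norm_ne_zero_iff.mpr hx
  have hinv := (hasDerivAt_inv hx0).comp_hasFDerivAt x (hasFDerivAt_norm' x hx)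
  have hmul := hinv.const_mul (couettePsi1 Rout μ)
  have hterm1 := hmul.smul (hasFDerivAt_id x)
  have hterm2 : HasFDerivAt (fun y : EuclideanSpace ℝ (Fin 2) => couettePsi2 Rout μ • y)
      (couettePsi2 Rout μ • ContinuousLinearMap.id ℝ (EuclideanSpace ℝ (Fin 2))) x :=
    (hasFDerivAt_id x).const_smul (couettePsi2 Rout μ)
  have hM := hterm1.add hterm2
  simp only [Function.comp_def, id_eq] at hM
  have heq : (fun y : EuclideanSpace ℝ (Fin 2) =>
      (couettePsi1 Rout μ * ‖y‖⁻¹) • y + couettePsi2 Rout μ • y) = couetteMap Rout μ := by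
    funext y; simp [couetteMap, div_eq_mul_inv]
  rw [show ((fun y : EuclideanSpace ℝ (Fin 2) => couettePsi1 Rout μ * ‖y‖⁻¹) • id +
      fun y : EuclideanSpace ℝ (Fin 2) => couettePsi2 Rout μ • y) = couetteMap Rout μ from heq] at hM
  have hf := hM.fderiv
  simp only [couetteJacobian, Matrix.of_apply, hf]
  simp only [ContinuousLinearMap.add_apply, ContinuousLinearMap.smul_apply,
    ContinuousLinearMap.smulRight_apply, ContinuousLinearMap.coe_id', id_eq,
    PiLp.add_apply, PiLp.smul_apply, smul_eq_mul,
    EuclideanSpace.inner_single_right, EuclideanSpace.single_apply]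
  have hxj : (innerSL ℝ x) (EuclideanSpace.single j 1) = x j := by
    simp [EuclideanSpace.inner_single_right]
  rw [hxj]
  by_cases h : i = j
  · subst h; simp only [if_pos rfl]; field_simp; ring
  · simp only [if_neg h, if_neg (Ne.symm h)]; field_simp; ring

/-- The adjugate of the Jacobian of `M_μ` admits the separated representation
`adj(D M_μ(x)) = ψ²(μ)·I₂ + ψ¹(μ)·(1/‖x‖³)·[[x₁², x₁x₂], [x₁x₂, x₂²]]` for `x ≠ 0`. -/
theorem couetteJacobian_adjugate (Rout μ : ℝ) (hRout : 1 < Rout)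
    (hμ₁ : 1 ≤ μ) (hμ₂ : μ < Rout) (x : EuclideanSpace ℝ (Fin 2)) (hx : x ≠ 0) :
    (couetteJacobian Rout μ x).adjugate =
      couettePsi2 Rout μ • (1 : Matrix (Fin 2) (Fin 2) ℝ) +
        couettePsi1 Rout μ •
          ((1 / ‖x‖ ^ 3) • (Matrix.of ![![x 0 ^ 2, x 0 * x 1], ![x 0 * x 1, x 1 ^ 2]] : Matrix (Fin 2) (Fin 2) ℝ)) := by
  have hx0 : ‖x‖ ≠ 0 := norm_ne_zero_iff.mpr hx
  have hsq : x 0 ^ 2 + x 1 ^ 2 = ‖x‖ ^ 2 := by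
    rw [EuclideanSpace.norm_eq, Real.sq_sqrt (by positivity)]
    simp [Fin.sum_univ_two, Real.norm_eq_abs, sq_abs]
  rw [Matrix.adjugate_fin_two]
  have e1 := couetteJacobian_apply Rout μ x hx 0 0
  have e2 := couetteJacobian_apply Rout μ x hx 0 1
  have e3 := couetteJacobian_apply Rout μ x hx 1 0
  have e4 := couetteJacobian_apply Rout μ x hx 1 1
  simp only [if_pos rfl, reduceCtorEq, Fin.isValue, if_neg, ite_false, Fin.zero_eq_one_iff,
    Fin.one_eq_zero_iff, OfNat.ofNat_ne_one, mul_one, mul_zero, zero_sub, ite_true] at e1 e2 e3 e4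
  ext i j
  fin_cases i <;> fin_cases j <;>
    simp only [Matrix.cons_val', Matrix.cons_val_zero, Matrix.empty_val',
      Matrix.cons_val_fin_one, Matrix.add_apply, Matrix.smul_apply, Matrix.one_apply_eq,
      Matrix.one_apply_ne, Matrix.of_apply, smul_eq_mul, Matrix.cons_val_one,
      Matrix.head_cons, Matrix.head_fin_const, e1, e2, e3, e4, Matrix.neg_apply,
      Fin.mk_one, Fin.mk_zero, Fin.isValue, ne_eq, Fin.zero_eq_one_iff, OfNat.ofNat_ne_one,
      not_false_eq_true, Fin.one_eq_zero_iff, Matrix.one_apply, if_neg, mul_zero, mul_one, Fin.reduceAdd, Fin.reduceEq, ↓reduceIte,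
      zero_add]
  · field_simp
    linear_combination (-couettePsi1 Rout μ) * hsq
  · field_simp
    rw [if_neg (by decide)]; ring
  · field_simp
  · field_simp
    linear_combination (-couettePsi1 Rout μ) * hsq
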